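/- Let f : ℝ → ℝ be a nonnegative influence function whose support is an interval containing 0, and suppose there exist a ≤ b and c > 0 with f(a), f(b), f(a+c), f(b+c) all positive and f(a)/f(a+c) > f(b)/f(b+c). Then f is not order preserving: there exist n, a vector x : Fin n → ℝ, and indices i, j with x i ≤ x j, all denominators positive, such that the updated opinions satisfy x_i' > x_j'. -/

import Mathlib

set_option maxHeartbeats 1000000

/-- A quadratic with positive leading coefficient is positive at some natural number. -/
lemma krause_quad_pos (A B C : ℝ) (hA : 0 < A) :
    ∃ m : ℕ, 0 < A * (m : ℝ) ^ 2 + B * (m : ℝ) + C := by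
  obtain ⟨m, hm⟩ := exists_nat_ge (max 1 ((|B| + |C| + 1) / A))
  refine ⟨m, ?_⟩
  have h1 : (1 : ℝ) ≤ m := le_trans (le_max_left _ _) hm
  have hm0 : (0 : ℝ) ≤ m := by linarith
  have h2 : (|B| + |C| + 1) / A ≤ m := le_trans (le_max_right _ _) hm
  have h3 : |B| + |C| + 1 ≤ A * m := by rwa [div_le_iff₀ hA, mul_comm] at h2
  have hB := neg_abs_le B
  have hC := neg_abs_le C
  nlinarith [mul_le_mul_of_nonneg_right h3 hm0, mul_le_mul_of_nonneg_right hB hm0,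
    abs_nonneg B, abs_nonneg C]

/-- If the ratio condition is strictly violated somewhere, then the influence
function is not order preserving: some configuration has crossing opinions. -/
theorem krause_not_order_preserving
    (f : ℝ → ℝ) (hf : ∀ y, 0 ≤ f y)
    (hord : Set.OrdConnected {y | 0 < f y}) (h0 : 0 < f 0)
    (hlen : ∃ y, y ≠ 0 ∧ 0 < f y)
    (a b c : ℝ) (hab : a ≤ b) (hc : 0 < c)
    (ha : 0 < f a) (hb : 0 < f b) (hac : 0 < f (a + c)) (hbc : 0 < f (b + c))
    (hviol : f b / f (b + c) < f a / f (a + c)) :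
    ∃ (n : ℕ) (x : Fin n → ℝ) (i j : Fin n), x i ≤ x j ∧
      (0 < ∑ k, f (x k - x i)) ∧ (0 < ∑ k, f (x k - x j)) ∧
      (∑ k, f (x k - x j) * x k) / (∑ k, f (x k - x j)) <
        (∑ k, f (x k - x i) * x k) / (∑ k, f (x k - x i)) := by
  set d := b - a with hd
  -- abbreviations for the function values
  set fa := f a
  set fb := f b
  set fac := f (a + c)
  set fbc := f (b + c)
  set f0 := f 0
  set fab := f (a - b)
  set fd := f d
  have hfab : 0 ≤ fab := hf _
  have hfd : 0 ≤ fd := hf _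
  -- cross-multiplied violation
  have hcross : fb * fac < fa * fbc := by
    rwa [div_lt_div_iff₀ hbc hac] at hviol
  -- coefficients of the quadratic in m
  set P : ℝ := f0 + fd
  set Q : ℝ := fb + fbc
  set R : ℝ := fd * d
  set U : ℝ := fb * b + fbc * (b + c)
  set P' : ℝ := f0 + fab
  set Q' : ℝ := fa + fac
  set R' : ℝ := f0 * d
  set U' : ℝ := fa * b + fac * (b + c)
  have hA : 0 < U * Q' - U' * Q := by
    have : U * Q' - U' * Q = c * (fa * fbc - fb * fac) := by ring
    rw [this]
    have := sub_pos.2 hcross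
    positivity
  obtain ⟨m, hm⟩ := krause_quad_pos (U * Q' - U' * Q)
    (U * P' + R * Q' - U' * P - R' * Q) (R * P' - R' * P) hA
  set M : ℝ := (m : ℝ) with hM
  have hM0 : 0 ≤ M := Nat.cast_nonneg m
  -- the configuration
  set x : Fin (m + m + 2) → ℝ :=
    Fin.append (Fin.append (fun _ : Fin m => b) (fun _ : Fin m => b + c)) ![0, d] with hx
  have key : ∀ g : ℝ → ℝ, ∑ k, g (x k) = M * g b + M * g (b + c) + (g 0 + g d) := by
    intro g
    rw [hx, Fin.sum_univ_add, Fin.sum_univ_add]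
    simp only [Fin.append_left, Fin.append_right, Fin.sum_univ_two, Finset.sum_const,
      Finset.card_univ, Fintype.card_fin, nsmul_eq_mul, Matrix.cons_val_zero,
      Matrix.cons_val_one, Matrix.head_cons]
    rfl
  set i : Fin (m + m + 2) := Fin.natAdd (m + m) 0 with hi
  set j : Fin (m + m + 2) := Fin.natAdd (m + m) 1 with hj
  have hxi : x i = 0 := by
    rw [hx, hi, Fin.append_right]
    simp
  have hxj : x j = d := by
    rw [hx, hj, Fin.append_right]
    simp
  -- the four sums
  have hS1 : ∑ k, f (x k - x i) = M * fb + M * fbc + (f0 + fd) := by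
    rw [hxi]
    have h := key (fun y => f (y - 0))
    simpa using h
  have hT1 : ∑ k, f (x k - x i) * x k = M * (fb * b) + M * (fbc * (b + c)) + (f0 * 0 + fd * d) := by
    rw [hxi]
    have h := key (fun y => f (y - 0) * y)
    simpa using h
  have e1 : b - d = a := by rw [hd]; ring
  have e2 : b + c - d = a + c := by rw [hd]; ring
  have e3 : (0 : ℝ) - d = a - b := by rw [hd]; ring
  have e4 : d - d = 0 := by ring
  have hS2 : ∑ k, f (x k - x j) = M * fa + M * fac + (fab + f0) := by
    rw [hxj]
    have h := key (fun y => f (y - d))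
    simp only [e1, e2, e3, e4] at h
    exact h
  have hT2 : ∑ k, f (x k - x j) * x k = M * (fa * b) + M * (fac * (b + c)) + (fab * 0 + f0 * d) := by
    rw [hxj]
    have h := key (fun y => f (y - d) * y)
    simp only [e1, e2, e3, e4] at h
    exact h
  have hpos1 : 0 < ∑ k, f (x k - x i) := by
    rw [hS1]
    nlinarith [mul_nonneg hM0 (hf b), mul_nonneg hM0 (hf (b + c))]
  have hpos2 : 0 < ∑ k, f (x k - x j) := by
    rw [hS2]
    nlinarith [mul_nonneg hM0 (hf a), mul_nonneg hM0 (hf (a + c))]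
  refine ⟨m + m + 2, x, i, j, ?_, hpos1, hpos2, ?_⟩
  · rw [hxi, hxj, hd]; linarith
  · rw [div_lt_div_iff₀ hpos2 hpos1, hS1, hS2, hT1, hT2]
    have hring :
        (M * (fb * b) + M * (fbc * (b + c)) + (f0 * 0 + fd * d)) * (M * fa + M * fac + (fab + f0))
        - (M * (fa * b) + M * (fac * (b + c)) + (fab * 0 + f0 * d)) * (M * fb + M * fbc + (f0 + fd))
        = (U * Q' - U' * Q) * M ^ 2 + (U * P' + R * Q' - U' * P - R' * Q) * M
          + (R * P' - R' * P) := by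
      simp only [P, Q, R, U, P', Q', R', U']
      ring
    linarith [hm, hring]
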